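/- Assume y*_p < y*_int < y*_u. Then: (i) there exists z ∈ [0,1] such that (1−y*_int)(z+α(1−z))β_p = γ, so the constant function y ≡ y*_int is a solution of the reduced hybrid SIS dynamics (a sliding mode); (ii) every solution y of the reduced hybrid SIS dynamics with y(0) ∈ (0,1] satisfies y(t) → y*_int as t → ∞, with y strictly increasing while y(t) < y*_int and strictly decreasing while y(t) > y*_int. -/

import Mathlib

/-- A solution of the reduced hybrid SIS dynamics obtained under timescale
separation: a differentiable y : [0,∞) → [0,1] following the dynamics with
β = β_p below the threshold y*_int = c_P/(L(1−α)β_p), β = αβ_p above it, and a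
convex combination (parametrized by z ∈ [0,1]) at the threshold. -/
def IsReducedSISSol (βp α γ cP L : ℝ) (y : ℝ → ℝ) : Prop :=
  (∀ t ≥ (0:ℝ), y t ∈ Set.Icc (0:ℝ) 1) ∧
  ∀ t ≥ (0:ℝ),
    (y t < cP / (L * (1 - α) * βp) →
      HasDerivAt y (((1 - y t) * βp - γ) * y t) t) ∧
    (cP / (L * (1 - α) * βp) < y t →
      HasDerivAt y (((1 - y t) * (α * βp) - γ) * y t) t) ∧
    (y t = cP / (L * (1 - α) * βp) → ∃ z ∈ Set.Icc (0:ℝ) 1,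
      HasDerivAt y
        (((1 - cP / (L * (1 - α) * βp)) * (z + α * (1 - z)) * βp - γ) *
          (cP / (L * (1 - α) * βp))) t)

/-- If the derivative of `y` is negative whenever `y` exceeds `S`, then the
region `y ≤ S` is forward invariant. -/
lemma aux_inv_below (S : ℝ) (y : ℝ → ℝ)
    (hcont : ContinuousOn y (Set.Ici 0))
    (hderneg : ∀ t ≥ (0:ℝ), S < y t → deriv y t < 0) :
    ∀ t0 ≥ (0:ℝ), y t0 ≤ S → ∀ t1 ≥ t0, y t1 ≤ S := by
  intro t0 ht0 hyt0 t1 ht1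
  by_contra h1
  push_neg at h1
  have ht01 : t0 < t1 := by
    rcases eq_or_lt_of_le ht1 with h | h
    · exact absurd hyt0 (by rw [h]; exact not_le.mpr h1)
    · exact h
  set A : Set ℝ := Set.Icc t0 t1 ∩ y ⁻¹' Set.Iic S with hA
  have hsub : Set.Icc t0 t1 ⊆ Set.Ici 0 := fun x hx => le_trans ht0 hx.1
  have hAc : IsClosed A :=
    (hcont.mono hsub).preimage_isClosed_of_isClosed isClosed_Icc isClosed_Iic
  have hAne : A.Nonempty := ⟨t0, ⟨le_rfl, ht01.le⟩, hyt0⟩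
  have hAbdd : BddAbove A := ⟨t1, fun x hx => hx.1.2⟩
  set t2 := sSup A with ht2
  have ht2A : t2 ∈ A := hAc.csSup_mem hAne hAbdd
  have ht2le : t2 ≤ t1 := ht2A.1.2
  have ht2ge : t0 ≤ t2 := ht2A.1.1
  have hyt2 : y t2 ≤ S := ht2A.2
  have ht2lt : t2 < t1 := lt_of_le_of_ne ht2le (by
    intro h; rw [h] at hyt2; exact absurd hyt2 (not_le.mpr h1))
  have hmid : ∀ u, t2 < u → u ≤ t1 → S < y u := by
    intro u hu1 hu2
    by_contra hus
    push_neg at hus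
    have huA : u ∈ A := ⟨⟨le_trans ht2ge hu1.le, hu2⟩, hus⟩
    exact absurd (le_csSup hAbdd huA) (not_le.mpr hu1)
  have hanti : StrictAntiOn y (Set.Icc t2 t1) := by
    apply strictAntiOn_of_deriv_neg (convex_Icc _ _)
      (hcont.mono (fun x hx => le_trans (le_trans ht0 ht2ge) hx.1))
    intro u hu
    rw [interior_Icc] at hu
    exact hderneg u (le_trans (le_trans ht0 ht2ge) hu.1.le) (hmid u hu.1 hu.2.le)
  have hlt : y t1 < y t2 := hanti ⟨le_rfl, ht2le⟩ ⟨ht2le, le_rfl⟩ ht2lt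
  linarith

/-- If the derivative of `y` is positive whenever `y` is below `S`, then the
region `S ≤ y` is forward invariant. -/
lemma aux_inv_above (S : ℝ) (y : ℝ → ℝ)
    (hcont : ContinuousOn y (Set.Ici 0))
    (hderpos : ∀ t ≥ (0:ℝ), y t < S → 0 < deriv y t) :
    ∀ t0 ≥ (0:ℝ), S ≤ y t0 → ∀ t1 ≥ t0, S ≤ y t1 := by
  intro t0 ht0 hyt0 t1 ht1
  by_contra h1
  push_neg at h1
  have ht01 : t0 < t1 := by
    rcases eq_or_lt_of_le ht1 with h | h
    · exact absurd hyt0 (by rw [h]; exact not_le.mpr h1)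
    · exact h
  set A : Set ℝ := Set.Icc t0 t1 ∩ y ⁻¹' Set.Ici S with hA
  have hsub : Set.Icc t0 t1 ⊆ Set.Ici 0 := fun x hx => le_trans ht0 hx.1
  have hAc : IsClosed A :=
    (hcont.mono hsub).preimage_isClosed_of_isClosed isClosed_Icc isClosed_Ici
  have hAne : A.Nonempty := ⟨t0, ⟨le_rfl, ht01.le⟩, hyt0⟩
  have hAbdd : BddAbove A := ⟨t1, fun x hx => hx.1.2⟩
  set t2 := sSup A with ht2
  have ht2A : t2 ∈ A := hAc.csSup_mem hAne hAbdd
  have ht2le : t2 ≤ t1 := ht2A.1.2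
  have ht2ge : t0 ≤ t2 := ht2A.1.1
  have hyt2 : S ≤ y t2 := ht2A.2
  have ht2lt : t2 < t1 := lt_of_le_of_ne ht2le (by
    intro h; rw [h] at hyt2; exact absurd hyt2 (not_le.mpr h1))
  have hmid : ∀ u, t2 < u → u ≤ t1 → y u < S := by
    intro u hu1 hu2
    by_contra hus
    push_neg at hus
    have huA : u ∈ A := ⟨⟨le_trans ht2ge hu1.le, hu2⟩, hus⟩
    exact absurd (le_csSup hAbdd huA) (not_le.mpr hu1)
  have hmono : StrictMonoOn y (Set.Icc t2 t1) := by
    apply strictMonoOn_of_deriv_pos (convex_Icc _ _)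
      (hcont.mono (fun x hx => le_trans (le_trans ht0 ht2ge) hx.1))
    intro u hu
    rw [interior_Icc] at hu
    exact hderpos u (le_trans (le_trans ht0 ht2ge) hu.1.le) (hmid u hu.1 hu.2.le)
  have hlt : y t2 < y t1 := hmono ⟨le_rfl, ht2le⟩ ⟨ht2le, le_rfl⟩ ht2lt
  linarith

/-- A lower linear growth bound from a lower bound on the derivative. -/
lemma aux_unbounded (y : ℝ → ℝ) (c : ℝ)
    (hdiff : ∀ t ≥ (0:ℝ), DifferentiableAt ℝ y t)
    (hder : ∀ t ≥ (0:ℝ), c ≤ deriv y t) :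
    ∀ t ≥ (0:ℝ), y 0 + c * t ≤ y t := by
  intro t ht
  have hd : ∀ u ≥ (0:ℝ), HasDerivAt (fun x => y x - c * x) (deriv y u - c) u := by
    intro u hu
    have h1 := ((hdiff u hu).hasDerivAt).sub ((hasDerivAt_id u).const_mul c)
    simp at h1; exact h1
  have hmono : MonotoneOn (fun x => y x - c * x) (Set.Ici 0) := by
    apply monotoneOn_of_deriv_nonneg (convex_Ici 0)
    · intro u hu
      exact ((hd u hu).differentiableAt).continuousAt.continuousWithinAt
    · intro u hu
      rw [interior_Ici] at hu
      exact ((hd u hu.le).differentiableAt).differentiableWithinAt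
    · intro u hu
      rw [interior_Ici] at hu
      rw [(hd u hu.le).deriv]
      linarith [hder u hu.le]
  have h0t := hmono Set.self_mem_Ici ht ht
  simp only [mul_zero, sub_zero] at h0t
  linarith

/-- An upper linear bound from an upper bound on the derivative. -/
lemma aux_decay (y : ℝ → ℝ) (c : ℝ)
    (hdiff : ∀ t ≥ (0:ℝ), DifferentiableAt ℝ y t)
    (hder : ∀ t ≥ (0:ℝ), deriv y t ≤ c) :
    ∀ t ≥ (0:ℝ), y t ≤ y 0 + c * t := by
  intro t ht
  have hd : ∀ u ≥ (0:ℝ), HasDerivAt (fun x => y x - c * x) (deriv y u - c) u := by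
    intro u hu
    have h1 := ((hdiff u hu).hasDerivAt).sub ((hasDerivAt_id u).const_mul c)
    simp at h1; exact h1
  have hmono : AntitoneOn (fun x => y x - c * x) (Set.Ici 0) := by
    apply antitoneOn_of_deriv_nonpos (convex_Ici 0)
    · intro u hu
      exact ((hd u hu).differentiableAt).continuousAt.continuousWithinAt
    · intro u hu
      rw [interior_Ici] at hu
      exact ((hd u hu.le).differentiableAt).differentiableWithinAt
    · intro u hu
      rw [interior_Ici] at hu
      rw [(hd u hu.le).deriv]
      linarith [hder u hu.le]
  have h0t := hmono Set.self_mem_Ici ht ht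
  simp only [mul_zero, sub_zero] at h0t
  linarith

/-- Positivity is preserved when `y' ≥ -γ y`. -/
lemma aux_pos (γ : ℝ) (y : ℝ → ℝ) (hy0 : 0 < y 0)
    (hd : ∀ t ≥ (0:ℝ), ∃ d, HasDerivAt y d t ∧ 0 ≤ γ * y t + d) :
    ∀ t ≥ (0:ℝ), 0 < y t := by
  intro t ht
  have hgd : ∀ u ≥ (0:ℝ), ∃ d', HasDerivAt (fun x => Real.exp (γ * x) * y x) d' u ∧ 0 ≤ d' := by
    intro u hu
    obtain ⟨d, hdu, hdnn⟩ := hd u hu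
    have he : HasDerivAt (fun x => Real.exp (γ * x)) (Real.exp (γ * u) * γ) u := by
      have h1 := ((hasDerivAt_id u).const_mul γ).exp
      simpa using h1
    refine ⟨Real.exp (γ * u) * γ * y u + Real.exp (γ * u) * d, he.mul hdu, ?_⟩
    have h1 : (0:ℝ) < Real.exp (γ * u) := Real.exp_pos _
    nlinarith [mul_nonneg h1.le hdnn]
  have hmono : MonotoneOn (fun x => Real.exp (γ * x) * y x) (Set.Ici 0) := by
    apply monotoneOn_of_deriv_nonneg (convex_Ici 0)
    · intro u hu
      obtain ⟨d', h', _⟩ := hgd u hu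
      exact h'.differentiableAt.continuousAt.continuousWithinAt
    · intro u hu
      rw [interior_Ici] at hu
      obtain ⟨d', h', _⟩ := hgd u hu.le
      exact h'.differentiableAt.differentiableWithinAt
    · intro u hu
      rw [interior_Ici] at hu
      obtain ⟨d', h', hnn⟩ := hgd u hu.le
      rw [h'.deriv]; exact hnn
  have h0t := hmono Set.self_mem_Ici ht ht
  simp only [mul_zero, Real.exp_zero, one_mul] at h0t
  nlinarith [Real.exp_pos (γ * t)]

set_option maxHeartbeats 2000000 in
/-- If y*_p < y*_int < y*_u then (i) there is z ∈ [0,1] with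
(1−y*_int)(z+α(1−z))β_p = γ, so the constant function y ≡ y*_int is a solution
of the reduced hybrid SIS dynamics (a sliding mode); and (ii) every solution
with y(0) ∈ (0,1] converges to y*_int, with positive derivative (strictly
increasing) while y(t) < y*_int and negative derivative (strictly decreasing)
while y(t) > y*_int. -/
theorem reduced_sis_sliding_mode
    (βp α γ cP L : ℝ)
    (hβp : βp > 0) (hα : α ∈ Set.Ioo (0:ℝ) 1) (hγ : γ > 0) (hcP : cP > 0) (hL : L > 0)
    (hyp : 1 - γ / (α * βp) < cP / (L * (1 - α) * βp))
    (hyu : cP / (L * (1 - α) * βp) < 1 - γ / βp) :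
    (∃ z ∈ Set.Icc (0:ℝ) 1,
      (1 - cP / (L * (1 - α) * βp)) * (z + α * (1 - z)) * βp = γ) ∧
    IsReducedSISSol βp α γ cP L (fun _ => cP / (L * (1 - α) * βp)) ∧
    (∀ y : ℝ → ℝ, IsReducedSISSol βp α γ cP L y → y 0 ∈ Set.Ioc (0:ℝ) 1 →
      Filter.Tendsto y Filter.atTop (nhds (cP / (L * (1 - α) * βp))) ∧
      (∀ t ≥ (0:ℝ),
        (y t < cP / (L * (1 - α) * βp) → 0 < deriv y t) ∧
        (cP / (L * (1 - α) * βp) < y t → deriv y t < 0))) := by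
  obtain ⟨hα0, hα1⟩ := hα
  have hden : 0 < L * (1 - α) * βp := mul_pos (mul_pos hL (by linarith)) hβp
  obtain ⟨S, hSdef⟩ : ∃ S : ℝ, S = cP / (L * (1 - α) * βp) := ⟨_, rfl⟩
  rw [← hSdef] at hyp hyu ⊢
  have hS0 : 0 < S := by rw [hSdef]; exact div_pos hcP hden
  have hαβ : 0 < α * βp := mul_pos hα0 hβp
  have key1 : γ < (1 - S) * βp := by
    have h2 : γ / βp < 1 - S := by linarith
    exact (div_lt_iff₀ hβp).mp h2
  have key2 : (1 - S) * (α * βp) < γ := by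
    have h2 : 1 - S < γ / (α * βp) := by linarith
    exact (lt_div_iff₀ hαβ).mp h2
  have hS1 : S < 1 := by nlinarith
  have h1S : (0:ℝ) < 1 - S := by linarith
  -- Part (i)
  have part1 : ∃ z ∈ Set.Icc (0:ℝ) 1, (1 - S) * (z + α * (1 - z)) * βp = γ := by
    have hvα : α < γ / ((1 - S) * βp) := by
      rw [lt_div_iff₀ (by positivity)]
      nlinarith
    have hv1 : γ / ((1 - S) * βp) < 1 := by
      rw [div_lt_one (by positivity)]
      nlinarith
    refine ⟨(γ / ((1 - S) * βp) - α) / (1 - α), ⟨?_, ?_⟩, ?_⟩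
    · apply div_nonneg (by linarith) (by linarith)
    · rw [div_le_one (by linarith)]
      linarith
    · have hne1 : (1:ℝ) - α ≠ 0 := by linarith
      have hne2 : (1 - S) * βp ≠ 0 := by positivity
      field_simp
      ring
  have part2 : IsReducedSISSol βp α γ cP L (fun _ => S) := by
    obtain ⟨z, hz, hzeq⟩ := part1
    constructor
    · intro t ht; exact ⟨hS0.le, hS1.le⟩
    · intro t ht
      rw [← hSdef]
      refine ⟨?_, ?_, fun _ => ⟨z, hz, ?_⟩⟩
    
      · intro h; exact absurd h (lt_irrefl S)
      · intro h; exact absurd h (lt_irrefl S)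
      · have hzero : ((1 - S) * (z + α * (1 - z)) * βp - γ) * S = 0 := by
          rw [hzeq]; ring
        rw [hzero]
        exact hasDerivAt_const t S
  refine ⟨part1, part2, ?_⟩
  intro y hy hy0
  obtain ⟨hbound, hdyn⟩ := hy
  rw [← hSdef] at hdyn
  -- derivative with nonnegativity used for positivity of y
  have hders : ∀ t ≥ (0:ℝ), ∃ d, HasDerivAt y d t ∧ 0 ≤ γ * y t + d := by
    intro t ht
    obtain ⟨hyl, hyu'⟩ := hbound t ht
    rcases lt_trichotomy (y t) S with h | h | h
    · refine ⟨_, (hdyn t ht).1 h, ?_⟩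
      nlinarith [mul_nonneg (mul_nonneg (sub_nonneg.mpr hyu') hβp.le) hyl]
    · obtain ⟨z, ⟨hz0, hz1⟩, hdz⟩ := (hdyn t ht).2.2 h
      refine ⟨_, hdz, ?_⟩
      rw [h]
      have hznn : (0:ℝ) ≤ z + α * (1 - z) := by nlinarith
      have hnn : 0 ≤ (1 - S) * (z + α * (1 - z)) * βp * S :=
        mul_nonneg (mul_nonneg (mul_nonneg h1S.le hznn) hβp.le) hS0.le
      nlinarith
    · refine ⟨_, (hdyn t ht).2.1 h, ?_⟩
      nlinarith [mul_nonneg (mul_nonneg (sub_nonneg.mpr hyu') hαβ.le) hyl]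
  have hdiff : ∀ t ≥ (0:ℝ), DifferentiableAt ℝ y t :=
    fun t ht => (hders t ht).choose_spec.1.differentiableAt
  have hcont : ContinuousOn y (Set.Ici 0) :=
    fun t ht => ((hdiff t ht).continuousAt).continuousWithinAt
  have hpos : ∀ t ≥ (0:ℝ), 0 < y t := aux_pos γ y hy0.1 hders
  have hder_lt : ∀ t ≥ (0:ℝ), y t < S → deriv y t = ((1 - y t) * βp - γ) * y t :=
    fun t ht h => ((hdyn t ht).1 h).deriv
  have hder_gt : ∀ t ≥ (0:ℝ), S < y t → deriv y t = ((1 - y t) * (α * βp) - γ) * y t :=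
    fun t ht h => ((hdyn t ht).2.1 h).deriv
  have hpos_der : ∀ t ≥ (0:ℝ), y t < S → 0 < deriv y t := by
    intro t ht h
    rw [hder_lt t ht h]
    have h1 : 0 < y t := hpos t ht
    have h2 : γ < (1 - y t) * βp := by nlinarith
    nlinarith
  have hneg_der : ∀ t ≥ (0:ℝ), S < y t → deriv y t < 0 := by
    intro t ht h
    rw [hder_gt t ht h]
    have h1 : 0 < y t := lt_trans hS0 h
    have h2 : (1 - y t) * (α * βp) < γ := by nlinarith
    nlinarith
  have hinvb := aux_inv_below S y hcont hneg_der
  have hinva := aux_inv_above S y hcont hpos_der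
  refine ⟨?_, fun t ht => ⟨hpos_der t ht, hneg_der t ht⟩⟩
  by_cases hC : ∃ t0 ≥ (0:ℝ), y t0 = S
  · obtain ⟨t0, ht0, he⟩ := hC
    have heq : ∀ t ≥ t0, y t = S := fun t ht =>
      le_antisymm (hinvb t0 ht0 he.le t ht) (hinva t0 ht0 he.ge t ht)
    exact Filter.Tendsto.congr'
      ((Filter.eventually_ge_atTop t0).mono (fun t ht => (heq t ht).symm))
      tendsto_const_nhds
  push_neg at hC
  rcases Ne.lt_or_gt (hC 0 le_rfl) with hA0 | hB0
  · -- y stays below S, increases to S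
    have hA : ∀ t ≥ (0:ℝ), y t < S :=
      fun t ht => lt_of_le_of_ne (hinvb 0 le_rfl hA0.le t ht) (hC t ht)
    have hmono : MonotoneOn y (Set.Ici 0) :=
      (strictMonoOn_of_deriv_pos (convex_Ici 0) hcont (by
        intro u hu; rw [interior_Ici] at hu
        exact hpos_der u hu.le (hA u hu.le))).monotoneOn
    have hwmono : Monotone (fun t => y (max t 0)) :=
      fun a b hab => hmono (le_max_right a 0) (le_max_right b 0) (max_le_max hab le_rfl)
    have hwbdd : BddAbove (Set.range (fun t => y (max t 0))) := by
      refine ⟨S, ?_⟩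
      rintro x ⟨t, rfl⟩
      exact (hA _ (le_max_right t 0)).le
    have hT := tendsto_atTop_ciSup hwmono hwbdd
    obtain ⟨l, hl⟩ : ∃ l : ℝ, l = ⨆ t, y (max t 0) := ⟨_, rfl⟩
    rw [← hl] at hT
    have hyw : (fun t => y (max t 0)) =ᶠ[Filter.atTop] y :=
      (Filter.eventually_ge_atTop (0:ℝ)).mono (fun t ht => by simp only [max_eq_left ht])
    have hTy : Filter.Tendsto y Filter.atTop (nhds l) := hT.congr' hyw
    have hlS : l = S := by
      have hle : l ≤ S := by
        rw [hl]; exact ciSup_le (fun t => (hA _ (le_max_right t 0)).le)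
      rcases eq_or_lt_of_le hle with h | hlt
      · exact h
      exfalso
      have hyl : ∀ t ≥ (0:ℝ), y t ≤ l := by
        intro t ht
        have h1 : (fun t => y (max t 0)) t ≤ ⨆ t, y (max t 0) := le_ciSup hwbdd t
        simp only [max_eq_left ht] at h1
        rw [hl]; exact h1
      have hylb : ∀ t ≥ (0:ℝ), y 0 ≤ y t := fun t ht => hmono Set.self_mem_Ici ht ht
      have hγl : γ < (1 - l) * βp := by
        linarith [key1, mul_lt_mul_of_pos_right hlt hβp]
      have hc : 0 < ((1 - l) * βp - γ) * y 0 :=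
        mul_pos (by linarith) hy0.1
      have hderc : ∀ t ≥ (0:ℝ), ((1 - l) * βp - γ) * y 0 ≤ deriv y t := by
        intro t ht
        rw [hder_lt t ht (hA t ht)]
        have h1 := hyl t ht
        have h2 := hylb t ht
        have ha : (1 - l) * βp - γ ≤ (1 - y t) * βp - γ := by
          linarith [mul_le_mul_of_nonneg_right h1 hβp.le]
        exact mul_le_mul ha h2 hy0.1.le (by linarith)
      have hgrow := aux_unbounded y _ hdiff hderc
      obtain ⟨c, hcdef⟩ : ∃ c : ℝ, c = ((1 - l) * βp - γ) * y 0 := ⟨_, rfl⟩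
      rw [← hcdef] at hgrow hc
      have ht2 : (0:ℝ) ≤ 2 / c := le_of_lt (div_pos two_pos hc)
      have h3 := hgrow (2 / c) ht2
      have h4 := (hbound (2 / c) ht2).2
      have h5 : c * (2 / c) = 2 := by
        rw [mul_comm]; exact div_mul_cancel₀ 2 (ne_of_gt hc)
      rw [h5] at h3
      linarith [hy0.1]
    rw [← hlS]; exact hTy
  · -- y stays above S, decreases to S
    have hB : ∀ t ≥ (0:ℝ), S < y t :=
      fun t ht => lt_of_le_of_ne (hinva 0 le_rfl hB0.le t ht) (Ne.symm (hC t ht))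
    have hanti : AntitoneOn y (Set.Ici 0) :=
      (strictAntiOn_of_deriv_neg (convex_Ici 0) hcont (by
        intro u hu; rw [interior_Ici] at hu
        exact hneg_der u hu.le (hB u hu.le))).antitoneOn
    have hwanti : Antitone (fun t => y (max t 0)) :=
      fun a b hab => hanti (le_max_right a 0) (le_max_right b 0) (max_le_max hab le_rfl)
    have hwbdd : BddBelow (Set.range (fun t => y (max t 0))) := by
      refine ⟨S, ?_⟩
      rintro x ⟨t, rfl⟩
      exact (hB _ (le_max_right t 0)).le
    have hT := tendsto_atTop_ciInf hwanti hwbdd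
    obtain ⟨l, hl⟩ : ∃ l : ℝ, l = ⨅ t, y (max t 0) := ⟨_, rfl⟩
    rw [← hl] at hT
    have hyw : (fun t => y (max t 0)) =ᶠ[Filter.atTop] y :=
      (Filter.eventually_ge_atTop (0:ℝ)).mono (fun t ht => by simp only [max_eq_left ht])
    have hTy : Filter.Tendsto y Filter.atTop (nhds l) := hT.congr' hyw
    have hlS : l = S := by
      have hge : S ≤ l := by
        rw [hl]; exact le_ciInf (fun t => (hB _ (le_max_right t 0)).le)
      rcases eq_or_lt_of_le hge with h | hlt
      · exact h.symm
      exfalso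
      have hyl : ∀ t ≥ (0:ℝ), l ≤ y t := by
        intro t ht
        have h1 : ⨅ t, y (max t 0) ≤ (fun t => y (max t 0)) t := ciInf_le hwbdd t
        simp only [max_eq_left ht] at h1
        rw [hl]; exact h1
      have hl0 : 0 < l := lt_trans hS0 hlt
      have hγl : (1 - l) * (α * βp) < γ := by
        linarith [key2, mul_lt_mul_of_pos_right hlt hαβ]
      have hc : 0 < (γ - (1 - l) * (α * βp)) * l :=
        mul_pos (by linarith) hl0
      have hderc : ∀ t ≥ (0:ℝ), deriv y t ≤ -((γ - (1 - l) * (α * βp)) * l) := by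
        intro t ht
        rw [hder_gt t ht (hB t ht)]
        have h1 := hyl t ht
        have ha : γ - (1 - l) * (α * βp) ≤ γ - (1 - y t) * (α * βp) := by
          linarith [mul_le_mul_of_nonneg_right h1 hαβ.le]
        have h2 := mul_le_mul ha h1 hl0.le (by linarith)
        nlinarith [h2]
      have hdec := aux_decay y _ hdiff hderc
      obtain ⟨c, hcdef⟩ : ∃ c : ℝ, c = (γ - (1 - l) * (α * βp)) * l := ⟨_, rfl⟩
      rw [← hcdef] at hdec hc
      have ht2 : (0:ℝ) ≤ 2 / c := le_of_lt (div_pos two_pos hc)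
      have h3 := hdec (2 / c) ht2
      have h4 := (hbound (2 / c) ht2).1
      have h5 : -c * (2 / c) = -2 := by
        rw [neg_mul, mul_comm, div_mul_cancel₀ (2:ℝ) (ne_of_gt hc)]
      rw [h5] at h3
      linarith [hy0.2]
    rw [← hlS]; exact hTy
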